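/- Let G=(V,E) be a graph with a finite multiset R of vertices and let M be a matroid on R of rank k with rank function r_M, satisfying (C1): R_v is independent in M for each v∈V. Then for any F_1,F_2⊆E with V(F_1)∩V(F_2)≠∅, one has f_{M,k}(F_1)+f_{M,k}(F_2) ≥ f_{M,k}(F_1∪F_2). -/
import Mathlib


open Finset
open scoped Classical

/-- Vertex set `V(F)` of an edge subset `F`: vertices incident to an edge of `F`. -/
noncomputable def incVerts {V E : Type*} [Fintype V] (ends : E → Sym2 V) (F : Finset E) :
    Finset V :=
  Finset.univ.filter (fun v => ∃ e ∈ F, v ∈ ends e)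

/-- The multiset `R_v` of roots located at a vertex `v` (as a set of root indices). -/
noncomputable def rootsAt {V ι : Type*} [Fintype ι] (root : ι → V) (v : V) : Finset ι :=
  Finset.univ.filter (fun i => root i = v)

/-- The multiset `R_F` of roots located at vertices of `V(F)`. -/
noncomputable def rootsOf {V E ι : Type*} [Fintype V] [Fintype ι] (ends : E → Sym2 V)
    (root : ι → V) (F : Finset E) : Finset ι :=
  Finset.univ.filter (fun i => root i ∈ incVerts ends F)

/-- The multiset `R_X` of roots located at vertices of `X ⊆ V`. -/
noncomputable def rootsIn {V ι : Type*} [Fintype ι] (root : ι → V) (X : Finset V) : Finset ι :=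
  Finset.univ.filter (fun i => root i ∈ X)

/-- A matroid on a finite ground type `ι`, given by its rank function. -/
structure FinMatroid (ι : Type*) [Fintype ι] where
  rk : Finset ι → ℕ
  rk_le_card : ∀ X : Finset ι, rk X ≤ X.card
  rk_mono : ∀ ⦃X Y : Finset ι⦄, X ⊆ Y → rk X ≤ rk Y
  rk_submodular : ∀ X Y : Finset ι, rk (X ∪ Y) + rk (X ∩ Y) ≤ rk X + rk Y

/-- Independence in a matroid given by a rank function. -/
def FinMatroid.Indep {ι : Type*} [Fintype ι] (M : FinMatroid ι) (X : Finset ι) : Prop :=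
  M.rk X = X.card

/-- `X` is a base of the matroid with rank function `ρ`: independent and spanning. -/
def IsBaseOf {ι : Type*} [Fintype ι] (ρ : Finset ι → ℕ) (X : Finset ι) : Prop :=
  ρ X = X.card ∧ ρ X = ρ Finset.univ

/-- The closure (span) `sp(X)` of `X` in the matroid with rank function `ρ`. -/
noncomputable def spOf {ι : Type*} [Fintype ι] (ρ : Finset ι → ℕ) (X : Finset ι) : Finset ι :=
  Finset.univ.filter (fun y => ρ (insert y X) = ρ X)

/-- Two vertices are adjacent via an edge of `F`. -/
def adjIn {V E : Type*} (ends : E → Sym2 V) (F : Finset E) (u v : V) : Prop :=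
  ∃ e ∈ F, ends e = s(u, v)

/-- The edge set `F` is connected: all its incident vertices are mutually reachable in `F`. -/
def connIn {V E : Type*} [Fintype V] (ends : E → Sym2 V) (F : Finset E) : Prop :=
  ∀ u ∈ incVerts ends F, ∀ v ∈ incVerts ends F, Relation.ReflTransGen (adjIn ends F) u v

/-- `(T, r)` is a rooted tree: `T` is empty, or `T` is connected and acyclic with `r ∈ V(T)`.
(A connected edge set `T` is acyclic iff `|T| + 1 = |V(T)|`.) -/
def IsRootedTree {V E : Type*} [Fintype V] (ends : E → Sym2 V) (T : Finset E) (r : V) : Prop :=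
  T = ∅ ∨ (connIn ends T ∧ T.card + 1 = (incVerts ends T).card ∧ r ∈ incVerts ends T)

/-- The vertex set `V(T, r) = V(T) ∪ {r}` spanned by the rooted tree `(T, r)`. -/
noncomputable def treeVerts {V E : Type*} [Fintype V] (ends : E → Sym2 V) (T : Finset E)
    (r : V) : Finset V :=
  insert r (incVerts ends T)

/-- `T` is a spanning tree on the vertex set `X`. -/
def IsSpanningTreeOn {V E : Type*} [Fintype V] (ends : E → Sym2 V) (X : Finset V)
    (T : Finset E) : Prop :=
  incVerts ends T ⊆ X ∧ (∀ u ∈ X, ∀ v ∈ X, Relation.ReflTransGen (adjIn ends T) u v) ∧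
    T.card + 1 = X.card

/-- The family `T` is a basic rooted-tree decomposition of the subgraph with vertex set `Vs`,
edge set `Es` and roots indexed by `Rs`, with respect to the matroid (on `Rs`) whose rank
function is `ρ`: the `T i` are edge-disjoint rooted trees partitioning `Es`, and every vertex
of `Vs` is spanned by a family of rooted trees whose root multiset is a base. -/
def IsBasicDecompFam {V E ι : Type*} [Fintype V] [Fintype ι] (ends : E → Sym2 V) (root : ι → V)
    (ρ : Finset ι → ℕ) (Vs : Finset V) (Rs : Finset ι) (Es : Finset E)
    (T : ι → Finset E) : Prop :=
  (∀ i ∈ Rs, T i ⊆ Es ∧ IsRootedTree ends (T i) (root i)) ∧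
  (∀ i ∉ Rs, T i = ∅) ∧
  (∀ i j, i ≠ j → Disjoint (T i) (T j)) ∧
  (∀ e ∈ Es, ∃ i ∈ Rs, e ∈ T i) ∧
  (∀ v ∈ Vs, IsBaseOf ρ (Rs.filter (fun i => v ∈ treeVerts ends (T i) (root i))))

/-- `(G, R)` admits a basic rooted-tree decomposition. -/
def HasBasicDecomp {V E ι : Type*} [Fintype V] [Fintype ι] (ends : E → Sym2 V) (root : ι → V)
    (ρ : Finset ι → ℕ) (Vs : Finset V) (Rs : Finset ι) (Es : Finset E) : Prop :=
  ∃ T : ι → Finset E, IsBasicDecompFam ends root ρ Vs Rs Es T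

/-- Condition (C1): the root multiset at each vertex is independent. -/
def CondC1 {V ι : Type*} [Fintype ι] (root : ι → V) (ρ : Finset ι → ℕ) : Prop :=
  ∀ v : V, ρ (rootsAt root v) = (rootsAt root v).card

/-- Condition (C2): `|F| + |R_F| ≤ k|V(F)| - k + ρ(R_F)` for every nonempty `F ⊆ E`. -/
def CondC2 {V E ι : Type*} [Fintype V] [Fintype E] [Fintype ι] (ends : E → Sym2 V)
    (root : ι → V) (ρ : Finset ι → ℕ) (k : ℕ) : Prop :=
  ∀ F : Finset E, F.Nonempty →
    F.card + (rootsOf ends root F).card + k ≤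
      k * (incVerts ends F).card + ρ (rootsOf ends root F)

/-- Condition (C3): `|E| + |R| = k|V|`. -/
def CondC3 (V E ι : Type*) [Fintype V] [Fintype E] [Fintype ι] (k : ℕ) : Prop :=
  Fintype.card E + Fintype.card ι = k * Fintype.card V

/-- The function `f_{M,c}(F) = c(|V(F)| - 1) - (|R_F| - r_M(R_F))`, as an integer. -/
noncomputable def fcount {V E ι : Type*} [Fintype V] [Fintype E] [Fintype ι] (ends : E → Sym2 V)
    (root : ι → V) (ρ : Finset ι → ℕ) (c : ℤ) (F : Finset E) : ℤ :=
  c * ((incVerts ends F).card - 1) -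
    (((rootsOf ends root F).card : ℤ) - (ρ (rootsOf ends root F) : ℤ))


lemma incVerts_union {V E : Type*} [Fintype V] (ends : E → Sym2 V) (F₁ F₂ : Finset E) :
    incVerts ends (F₁ ∪ F₂) = incVerts ends F₁ ∪ incVerts ends F₂ := by
  ext v; simp only [incVerts, Finset.mem_filter, Finset.mem_union, Finset.mem_univ, true_and]
  constructor
  · rintro ⟨e, he, hv⟩; rcases he with h | h
    · exact Or.inl ⟨e, h, hv⟩
    · exact Or.inr ⟨e, h, hv⟩
  · rintro (⟨e, he, hv⟩ | ⟨e, he, hv⟩)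
    · exact ⟨e, Or.inl he, hv⟩
    · exact ⟨e, Or.inr he, hv⟩

lemma rootsOf_eq_rootsIn {V E ι : Type*} [Fintype V] [Fintype ι] (ends : E → Sym2 V)
    (root : ι → V) (F : Finset E) :
    rootsOf ends root F = rootsIn root (incVerts ends F) := rfl

lemma rootsIn_union {V ι : Type*} [Fintype ι] (root : ι → V) (X Y : Finset V) :
    rootsIn root (X ∪ Y) = rootsIn root X ∪ rootsIn root Y := by
  ext i; simp [rootsIn]

lemma rootsIn_inter {V ι : Type*} [Fintype ι] (root : ι → V) (X Y : Finset V) :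
    rootsIn root (X ∩ Y) = rootsIn root X ∩ rootsIn root Y := by
  ext i; simp [rootsIn]

lemma card_rootsIn {V ι : Type*} [Fintype ι] (root : ι → V) (X : Finset V) :
    (rootsIn root X).card = ∑ v ∈ X, (rootsAt root v).card := by
  have h : rootsIn root X = X.biUnion (rootsAt root) := by
    ext i; simp [rootsIn, rootsAt, eq_comm]
  rw [h, Finset.card_biUnion]
  intro u hu v hv huv
  simp only [Finset.disjoint_left, rootsAt, Finset.mem_filter]
  rintro i ⟨-, h1⟩ ⟨-, h2⟩
  exact huv (h1 ▸ h2 ▸ rfl)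

lemma key_ineq {V ι : Type*} [Fintype ι] (root : ι → V) (M : FinMatroid ι) (k : ℕ)
    (hk : M.rk Finset.univ = k) (hC1 : CondC1 root M.rk)
    (X : Finset V) (hX : X.Nonempty) :
    ((rootsIn root X).card : ℤ) ≤ k * (X.card - 1) + M.rk (rootsIn root X) := by
  obtain ⟨v₀, hv₀⟩ := hX
  have hmono : (rootsAt root v₀).card ≤ M.rk (rootsIn root X) := by
    rw [← hC1 v₀]
    apply M.rk_mono
    intro i hi
    simp only [rootsAt, Finset.mem_filter] at hi
    simp only [rootsIn, Finset.mem_filter, Finset.mem_univ, true_and]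
    rw [hi.2]; exact hv₀
  have hbound : ∀ v : V, (rootsAt root v).card ≤ k := by
    intro v
    rw [← hC1 v, ← hk]
    exact M.rk_mono (Finset.subset_univ _)
  have hsum : (rootsIn root X).card = (rootsAt root v₀).card
      + ∑ v ∈ X.erase v₀, (rootsAt root v).card := by
    rw [card_rootsIn, ← Finset.add_sum_erase _ _ hv₀]
  have hrest : ∑ v ∈ X.erase v₀, (rootsAt root v).card ≤ k * (X.card - 1) := by
    calc ∑ v ∈ X.erase v₀, (rootsAt root v).card ≤ ∑ _v ∈ X.erase v₀, k :=
          Finset.sum_le_sum fun v _ => hbound v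
      _ = (X.erase v₀).card * k := by rw [Finset.sum_const, smul_eq_mul]
      _ = k * (X.card - 1) := by rw [Finset.card_erase_of_mem hv₀, mul_comm]
  have hc : 1 ≤ X.card := Finset.card_pos.mpr ⟨v₀, hv₀⟩
  have : (rootsIn root X).card ≤ k * (X.card - 1) + M.rk (rootsIn root X) := by
    rw [hsum]; omega
  zify [hc] at this
  linarith

/-- **Lemma (intersecting submodularity of `f_{M,k}`).**
Let `G = (V, E)` be a graph with a finite multiset `R` of vertices and `M` a matroid on `R`
of rank `k`, satisfying (C1).  Then for any `F₁, F₂ ⊆ E` with `V(F₁) ∩ V(F₂) ≠ ∅`,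
`f_{M,k}(F₁) + f_{M,k}(F₂) ≥ f_{M,k}(F₁ ∪ F₂)`. -/
theorem fcount_intersecting_submodular {V E ι : Type*} [Fintype V] [Fintype E] [Fintype ι]
    (ends : E → Sym2 V) (root : ι → V) (M : FinMatroid ι) (k : ℕ)
    (hk : M.rk Finset.univ = k)
    (hC1 : CondC1 root M.rk)
    (F₁ F₂ : Finset E) (hmeet : (incVerts ends F₁ ∩ incVerts ends F₂).Nonempty) :
    fcount ends root M.rk (k : ℤ) (F₁ ∪ F₂) ≤
      fcount ends root M.rk (k : ℤ) F₁ + fcount ends root M.rk (k : ℤ) F₂ := by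
  set V₁ := incVerts ends F₁ with hV₁
  set V₂ := incVerts ends F₂ with hV₂
  have hVu : incVerts ends (F₁ ∪ F₂) = V₁ ∪ V₂ := incVerts_union ends F₁ F₂
  set R₁ := rootsOf ends root F₁ with hR₁
  set R₂ := rootsOf ends root F₂ with hR₂
  have hRu : rootsOf ends root (F₁ ∪ F₂) = R₁ ∪ R₂ := by
    rw [rootsOf_eq_rootsIn, hVu, rootsIn_union, hR₁, hR₂,
      rootsOf_eq_rootsIn, rootsOf_eq_rootsIn]
  have hRi : rootsIn root (V₁ ∩ V₂) = R₁ ∩ R₂ := by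
    rw [rootsIn_inter, hR₁, hR₂, rootsOf_eq_rootsIn, rootsOf_eq_rootsIn]
  have hcardV : (V₁ ∪ V₂).card + (V₁ ∩ V₂).card = V₁.card + V₂.card :=
    Finset.card_union_add_card_inter V₁ V₂
  have hcardR : (R₁ ∪ R₂).card + (R₁ ∩ R₂).card = R₁.card + R₂.card :=
    Finset.card_union_add_card_inter R₁ R₂
  have hsub : M.rk (R₁ ∪ R₂) + M.rk (R₁ ∩ R₂) ≤ M.rk R₁ + M.rk R₂ :=
    M.rk_submodular R₁ R₂
  have hkey : ((rootsIn root (V₁ ∩ V₂)).card : ℤ)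
      ≤ k * ((V₁ ∩ V₂).card - 1) + M.rk (rootsIn root (V₁ ∩ V₂)) :=
    key_ineq root M k hk hC1 (V₁ ∩ V₂) hmeet
  rw [hRi] at hkey
  simp only [fcount, hVu, hRu, ← hV₁, ← hV₂, ← hR₁, ← hR₂]
  have h1 : ((V₁ ∪ V₂).card : ℤ) + (V₁ ∩ V₂).card = V₁.card + V₂.card := by
    exact_mod_cast hcardV
  have h2 : ((R₁ ∪ R₂).card : ℤ) + (R₁ ∩ R₂).card = R₁.card + R₂.card := by
    exact_mod_cast hcardR
  have h3 : (M.rk (R₁ ∪ R₂) : ℤ) + M.rk (R₁ ∩ R₂) ≤ M.rk R₁ + M.rk R₂ := by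
    exact_mod_cast hsub
  nlinarith [hkey, h1, h2, h3]
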